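/- (Lemma 1, persistence) Suppose the charging rates are generated by the sLLF algorithm on an instance I. If at some time t two EVs i, j with a_i ≤ t and a_j ≤ t satisfy ℓ_i(t) ≤ ℓ_j(t) and ℓ_i(t+1) > ℓ_j(t+1), then exactly one of the following holds: (a) t ≥ d_i and r_i(t) = 0; or (b) t < d_i, t < d_j, e_j(t+1) = 0, and r_i(t) ≠ 0. -/
import Mathlib


/-- `clamp x lo hi` is the projection of `x` onto the interval `[lo, hi]`. -/
noncomputable def clamp (x lo hi : ℝ) : ℝ := min (max x lo) hi

/-- Remaining energy demand at time `t`: `e_i(t) = e_i − Σ_{τ<t} r_i(τ)`. -/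
noncomputable def erem (e : ℝ) (r : ℕ → ℝ) (t : ℕ) : ℝ :=
  e - ∑ τ ∈ Finset.range t, r τ

/-- Laxity `ℓ_i(t) = max(d_i − t, 0) − e_i(t)/r̄_i`. -/
noncomputable def laxity (d : ℕ) (e rbar : ℝ) (r : ℕ → ℝ) (t : ℕ) : ℝ :=
  max ((d : ℝ) - (t : ℝ)) 0 - erem e r t / rbar

/-- The rates `r` (with thresholds `L`) are generated by the sLLF algorithm on the EVs in `V`
with power limit `Q`: for active EVs, `r_i(t) = clamp(r̄_i (L(t) − ℓ_i(t) + 1), 0,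
min(r̄_i, e_i(t)))`, rates vanish otherwise, and the total rate equals
`min(Q(t), Σ_{i∈V_t} min(r̄_i, e_i(t)))`. -/
def sLLFOn {n : ℕ} (V : Finset (Fin n)) (a d : Fin n → ℕ) (e rbar : Fin n → ℝ)
    (Q : ℕ → ℝ) (L : ℕ → ℝ) (r : Fin n → ℕ → ℝ) : Prop :=
  (∀ i ∈ V, ∀ t, a i ≤ t → t < d i →
    r i t = clamp (rbar i * (L t - laxity (d i) (e i) (rbar i) (r i) t + 1)) 0
      (min (rbar i) (erem (e i) (r i) t))) ∧
  (∀ i ∈ V, ∀ t, ¬(a i ≤ t ∧ t < d i) → r i t = 0) ∧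
  (∀ i ∉ V, ∀ t, r i t = 0) ∧
  (∀ t, ∑ i ∈ V.filter (fun i => a i ≤ t ∧ t < d i), r i t
      = min (Q t) (∑ i ∈ V.filter (fun i => a i ≤ t ∧ t < d i),
          min (rbar i) (erem (e i) (r i) t)))

lemma erem_succ (e : ℝ) (r : ℕ → ℝ) (t : ℕ) : erem e r (t + 1) = erem e r t - r t := by
  simp [erem, Finset.sum_range_succ]; ring

lemma laxity_succ_of_lt {d t : ℕ} (h : t < d) (e rbar : ℝ) (r : ℕ → ℝ) :
    laxity d e rbar r (t + 1) = laxity d e rbar r t - 1 + r t / rbar := by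
  have hd : (t : ℝ) + 1 ≤ (d : ℝ) := by exact_mod_cast h
  have h1 : max ((d : ℝ) - (t : ℝ)) 0 = (d : ℝ) - t := max_eq_left (by linarith)
  have h2 : max ((d : ℝ) - ((t + 1 : ℕ) : ℝ)) 0 = (d : ℝ) - ((t : ℝ) + 1) := by
    rw [max_eq_left] <;> push_cast <;> linarith
  unfold laxity
  rw [erem_succ, h1, h2]
  ring

lemma laxity_succ_of_ge {d t : ℕ} (h : d ≤ t) (e rbar : ℝ) (r : ℕ → ℝ) :
    laxity d e rbar r (t + 1) = laxity d e rbar r t + r t / rbar := by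
  have hd : (d : ℝ) ≤ (t : ℝ) := by exact_mod_cast h
  have h1 : max ((d : ℝ) - (t : ℝ)) 0 = 0 := max_eq_right (by linarith)
  have h2 : max ((d : ℝ) - ((t + 1 : ℕ) : ℝ)) 0 = 0 := by
    rw [max_eq_right] <;> push_cast <;> linarith
  unfold laxity
  rw [erem_succ, h1, h2]
  ring

/-- Lemma 1, persistence: under sLLF, if `ℓ_i(t) ≤ ℓ_j(t)` and
`ℓ_i(t+1) > ℓ_j(t+1)` then exactly one of the following holds:
(a) `t ≥ d_i` and `r_i(t) = 0`; or (b) `t < d_i`, `t < d_j`, `e_j(t+1) = 0` and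
`r_i(t) ≠ 0`. -/
theorem stmt_6 {n : ℕ} (T : ℕ) (a d : Fin n → ℕ) (e rbar : Fin n → ℝ) (P : ℕ → ℝ)
    (had : ∀ i, a i < d i) (hdT : ∀ i, d i ≤ T)
    (he : ∀ i, 0 < e i) (hrbar : ∀ i, 0 < rbar i) (hP : ∀ t, 0 ≤ P t)
    (L : ℕ → ℝ) (r : Fin n → ℕ → ℝ)
    (hrun : sLLFOn Finset.univ a d e rbar P L r)
    (i j : Fin n) (t : ℕ) (hai : a i ≤ t) (haj : a j ≤ t)
    (h1 : laxity (d i) (e i) (rbar i) (r i) t ≤ laxity (d j) (e j) (rbar j) (r j) t)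
    (h2 : laxity (d j) (e j) (rbar j) (r j) (t + 1)
        < laxity (d i) (e i) (rbar i) (r i) (t + 1)) :
    Xor' (d i ≤ t ∧ r i t = 0)
      (t < d i ∧ t < d j ∧ erem (e j) (r j) (t + 1) = 0 ∧ r i t ≠ 0) := by
  obtain ⟨hact, hinact, _, _⟩ := hrun
  -- remaining energy is always nonnegative
  have herem : ∀ k : Fin n, ∀ s : ℕ, 0 ≤ erem (e k) (r k) s := by
    intro k s
    induction s with
    | zero => simpa [erem] using (he k).le
    | succ s ih =>
      rw [erem_succ]
      by_cases hks : a k ≤ s ∧ s < d k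
      · rw [hact k (Finset.mem_univ k) s hks.1 hks.2]
        have h3 : clamp (rbar k * (L s - laxity (d k) (e k) (rbar k) (r k) s + 1)) 0
            (min (rbar k) (erem (e k) (r k) s)) ≤ erem (e k) (r k) s :=
          le_trans (min_le_right _ _) (min_le_right _ _)
        linarith
      · rw [hinact k (Finset.mem_univ k) s hks]; linarith
  -- rates are nonnegative and at most rbar, at most erem
  have hr_bounds : ∀ k : Fin n, ∀ s : ℕ,
      0 ≤ r k s ∧ r k s ≤ rbar k ∧ r k s ≤ erem (e k) (r k) s := by
    intro k s
    by_cases hks : a k ≤ s ∧ s < d k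
    · rw [hact k (Finset.mem_univ k) s hks.1 hks.2]
      unfold clamp
      refine ⟨le_min (le_max_right _ _) (le_min (hrbar k).le (herem k s)), ?_, ?_⟩
      · exact le_trans (min_le_right _ _) (min_le_left _ _)
      · exact le_trans (min_le_right _ _) (min_le_right _ _)
    · rw [hinact k (Finset.mem_univ k) s hks]
      exact ⟨le_refl _, (hrbar k).le, herem k s⟩
  by_cases hdi : d i ≤ t
  · -- case (a)
    have hri0 : r i t = 0 := hinact i (Finset.mem_univ i) t (by push_neg; intro _; omega)
    exact Or.inl ⟨⟨hdi, hri0⟩, fun hb => absurd hb.1 (by omega)⟩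
  · push_neg at hdi
    -- show t < d j
    have hdj : t < d j := by
      by_contra hdj
      push_neg at hdj
      have hrj0 : r j t = 0 := hinact j (Finset.mem_univ j) t (by push_neg; intro _; omega)
      have hlj : laxity (d j) (e j) (rbar j) (r j) (t + 1)
          = laxity (d j) (e j) (rbar j) (r j) t := by
        rw [laxity_succ_of_ge hdj, hrj0]; simp
      have hli : laxity (d i) (e i) (rbar i) (r i) (t + 1)
          = laxity (d i) (e i) (rbar i) (r i) t - 1 + r i t / rbar i :=
        laxity_succ_of_lt hdi _ _ _
      have hri_le : r i t / rbar i ≤ 1 := by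
        rw [div_le_one (hrbar i)]; exact (hr_bounds i t).2.1
      rw [hlj, hli] at h2
      linarith
    -- both active
    set li := laxity (d i) (e i) (rbar i) (r i) t with hli_def
    set lj := laxity (d j) (e j) (rbar j) (r j) t with hlj_def
    have hrec_i := laxity_succ_of_lt hdi (e i) (rbar i) (r i)
    have hrec_j := laxity_succ_of_lt hdj (e j) (rbar j) (r j)
    rw [hrec_i, hrec_j] at h2
    -- key inequality (E)
    have hE : lj + r j t / rbar j < li + r i t / rbar i := by linarith
    have hRi := hrbar i
    have hRj := hrbar j
    have hrj_nonneg : 0 ≤ r j t / rbar j := div_nonneg (hr_bounds j t).1 hRj.le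
    -- r i t > 0
    have hri_pos : 0 < r i t := by
      by_contra hri
      push_neg at hri
      have : r i t / rbar i ≤ 0 := div_nonpos_of_nonpos_of_nonneg hri hRi.le
      linarith
    -- clamp formula for i
    have hfi := hact i (Finset.mem_univ i) t hai hdi
    have hfj := hact j (Finset.mem_univ j) t haj hdj
    rw [← hli_def] at hfi
    rw [← hlj_def] at hfj
    -- r i t ≤ rbar i * (L t - li + 1)
    have hxi : r i t ≤ rbar i * (L t - li + 1) := by
      have h4 : r i t ≤ max (rbar i * (L t - li + 1)) 0 := by
        rw [hfi]; exact min_le_left _ _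
      rcases le_or_gt (rbar i * (L t - li + 1)) 0 with hx | hx
      · rw [max_eq_right hx] at h4; linarith
      · rwa [max_eq_left hx.le] at h4
    have hLi : li + r i t / rbar i ≤ L t + 1 := by
      have h6 : r i t / rbar i ≤ L t - li + 1 := by
        rw [div_le_iff₀ hRi]; nlinarith
      linarith
    -- e_j(t+1) = 0
    have hej0 : erem (e j) (r j) (t + 1) = 0 := by
      by_contra hne
      have hge : 0 ≤ erem (e j) (r j) (t + 1) := herem j (t + 1)
      have hpos : 0 < erem (e j) (r j) (t + 1) := lt_of_le_of_ne hge (Ne.symm hne)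
      rw [erem_succ] at hpos
      have hrj_lt : r j t < erem (e j) (r j) t := by linarith
      have h5 : r j t = min (min (max (rbar j * (L t - lj + 1)) 0) (rbar j))
          (erem (e j) (r j) t) := by
        rw [hfj]; unfold clamp; rw [min_assoc]
      have hrj_ge : min (rbar j * (L t - lj + 1)) (rbar j) ≤ r j t := by
        rcases le_total (min (max (rbar j * (L t - lj + 1)) 0) (rbar j))
            (erem (e j) (r j) t) with hle | hle
        · rw [h5, min_eq_left hle]
          exact min_le_min (le_max_left _ _) le_rfl
        · exfalso
          rw [h5, min_eq_right hle] at hrj_lt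
          exact lt_irrefl _ hrj_lt
      have hri_le : r i t / rbar i ≤ 1 := by
        rw [div_le_one hRi]; exact (hr_bounds i t).2.1
      rcases le_total (rbar j * (L t - lj + 1)) (rbar j) with hc | hc
      · have h7 : rbar j * (L t - lj + 1) ≤ r j t := by
          rw [min_eq_left hc] at hrj_ge; exact hrj_ge
        have h8 : L t - lj + 1 ≤ r j t / rbar j := by
          rw [le_div_iff₀ hRj]; nlinarith
        linarith
      · have h7 : rbar j ≤ r j t := by
          rw [min_eq_right hc] at hrj_ge; exact hrj_ge
        have h8 : (1 : ℝ) ≤ r j t / rbar j := by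
          rw [le_div_iff₀ hRj]; linarith
        linarith
    exact Or.inr ⟨⟨hdi, hdj, hej0, ne_of_gt hri_pos⟩, fun ha => absurd ha.1 (by omega)⟩
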